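/- Let d ∈ ℕ, 1 ≤ p < ∞, and let T ⊂ ℝ^d be a d-simplex. For x₀ ∈ ℝ^d let u_{x₀}(x) = 2⟨x₀, x⟩ − ‖x₀‖² be the tangent affine function to Q at x₀ (so that u_{x₀}(x) ≤ Q(x) for all x ∈ ℝ^d). Then inf{ (∫_T (Q(x) − u(x))^p dx)^{1/p} : u affine, u(x) ≤ Q(x) for all x ∈ T } = inf{ (∫_T (Q(x) − u_{x₀}(x))^p dx)^{1/p} : x₀ ∈ ℝ^d }; i.e., the best one-sided L_p-approximation of Q from below by affine functions on T coincides with the error of tangential interpolation of Q on T. -/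

import Mathlib

set_option maxHeartbeats 1000000


open MeasureTheory Metric Set

/-- The best one-sided `L_p`-approximation of `Q(x) = ∑ xⱼ² = ‖x‖²` from below by affine
functions on a `d`-simplex coincides with the error of tangential interpolation of `Q`,
i.e. with the infimum over tangency points `x₀` of the `L_p`-deviation of the tangent
affine function `x ↦ 2⟪x₀, x⟫ − ‖x₀‖²` from `Q`. -/
theorem tangential_interpolation_is_best_onesided_below
    (d : ℕ) (hd : 0 < d) (p : ℝ) (hp : 1 ≤ p)
    (v : Fin (d + 1) → EuclideanSpace ℝ (Fin d))
    (hind : AffineIndependent ℝ v) :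
    sInf {r : ℝ | ∃ (a : EuclideanSpace ℝ (Fin d)) (c : ℝ),
      (∀ x ∈ convexHull ℝ (Set.range v), (inner ℝ a x : ℝ) + c ≤ ∑ j, x j ^ 2) ∧
      r = (∫ x in convexHull ℝ (Set.range v),
        ((∑ j, x j ^ 2) - ((inner ℝ a x : ℝ) + c)) ^ p) ^ (1 / p)} =
    ⨅ x₀ : EuclideanSpace ℝ (Fin d),
      (∫ x in convexHull ℝ (Set.range v),
        ((∑ j, x j ^ 2) - (2 * (inner ℝ x₀ x : ℝ) - ‖x₀‖ ^ 2)) ^ p) ^ (1 / p) := by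
  have hp0 : (0:ℝ) ≤ p := le_trans zero_le_one hp
  have hip0 : (0:ℝ) ≤ 1 / p := by positivity
  set T : Set (EuclideanSpace ℝ (Fin d)) := convexHull ℝ (Set.range v) with hT
  have hsq : ∀ x : EuclideanSpace ℝ (Fin d), ∑ j, x j ^ 2 = ‖x‖ ^ 2 := by
    intro x; rw [EuclideanSpace.norm_eq, Real.sq_sqrt (by positivity)]; simp [Real.norm_eq_abs, sq_abs]
  -- tangent functions lie below Q everywhere
  have htang : ∀ x₀ x : EuclideanSpace ℝ (Fin d),
      2 * (inner ℝ x₀ x : ℝ) - ‖x₀‖ ^ 2 ≤ ∑ j, x j ^ 2 := by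
    intro x₀ x
    have h := sq_nonneg ‖x - x₀‖
    rw [norm_sub_sq_real] at h
    have hc : (inner ℝ x₀ x : ℝ) = (inner ℝ x x₀ : ℝ) := (real_inner_comm x x₀)

    rw [hsq x]
    linarith
  have hTcomp : IsCompact T := (Set.finite_range v).isCompact_convexHull ℝ
  have hTmeas : MeasurableSet T := hTcomp.isClosed.measurableSet
  have hTconv : Convex ℝ T := convex_convexHull ℝ _
  have hTne : T.Nonempty := ⟨v 0, subset_convexHull ℝ _ ⟨0, rfl⟩⟩
  set S : Set ℝ := {r : ℝ | ∃ (a : EuclideanSpace ℝ (Fin d)) (c : ℝ),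
      (∀ x ∈ T, (inner ℝ a x : ℝ) + c ≤ ∑ j, x j ^ 2) ∧
      r = (∫ x in T, ((∑ j, x j ^ 2) - ((inner ℝ a x : ℝ) + c)) ^ p) ^ (1 / p)} with hS
  set f : EuclideanSpace ℝ (Fin d) → ℝ := fun x₀ =>
      (∫ x in T, ((∑ j, x j ^ 2) - (2 * (inner ℝ x₀ x : ℝ) - ‖x₀‖ ^ 2)) ^ p) ^ (1 / p) with hf
  -- integrability of the integrands
  have hinteg : ∀ (a : EuclideanSpace ℝ (Fin d)) (c : ℝ),
      IntegrableOn (fun x => ((∑ j, x j ^ 2) - ((inner ℝ a x : ℝ) + c)) ^ p) T volume := by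
    intro a c
    apply ContinuousOn.integrableOn_compact hTcomp
    apply Continuous.continuousOn
    apply Continuous.rpow_const
    · apply Continuous.sub
      · exact continuous_finset_sum _ fun j _ =>
          ((continuous_apply j).comp (PiLp.continuous_ofLp 2 _)).pow 2
      · exact ((continuous_const.inner continuous_id).add continuous_const)
    · intro x; exact Or.inr hp0
  have hintegT : ∀ x₀ : EuclideanSpace ℝ (Fin d),
      IntegrableOn (fun x => ((∑ j, x j ^ 2) - (2 * (inner ℝ x₀ x : ℝ) - ‖x₀‖ ^ 2)) ^ p) T volume := by
    intro x₀
    have := hinteg ((2:ℝ) • x₀) (-‖x₀‖ ^ 2)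
    refine this.congr_fun (fun x _ => ?_) hTmeas
    beta_reduce; rw [real_inner_smul_left]; ring_nf
  -- f values are nonneg
  have hfnn : ∀ x₀, 0 ≤ f x₀ := by
    intro x₀
    apply Real.rpow_nonneg
    apply setIntegral_nonneg hTmeas
    intro x _
    exact Real.rpow_nonneg (by linarith [htang x₀ x]) p
  have hSnn : ∀ r ∈ S, (0:ℝ) ≤ r := by
    rintro r ⟨a, c, hle, rfl⟩
    apply Real.rpow_nonneg
    apply setIntegral_nonneg hTmeas
    intro x hx
    exact Real.rpow_nonneg (by linarith [hle x hx]) p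
  have hSbdd : BddBelow S := ⟨0, fun r hr => hSnn r hr⟩
  have hfbdd : BddBelow (Set.range f) := ⟨0, by rintro _ ⟨x₀, rfl⟩; exact hfnn x₀⟩
  -- range f ⊆ S
  have hsub : Set.range f ⊆ S := by
    rintro _ ⟨x₀, rfl⟩
    refine ⟨(2:ℝ) • x₀, -‖x₀‖ ^ 2, fun x _ => ?_, ?_⟩
    · have := htang x₀ x
      rw [real_inner_smul_left]; linarith
    · refine congrArg (fun t : ℝ => t ^ (1/p)) ?_
      refine setIntegral_congr_fun hTmeas (fun x _ => ?_)
      rw [real_inner_smul_left]; ring_nf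
  -- Snonempty
  have hSne : S.Nonempty := ⟨f 0, hsub ⟨0, rfl⟩⟩
  apply le_antisymm
  · rw [iInf]
    exact csInf_le_csInf hSbdd ⟨f 0, ⟨0, rfl⟩⟩ hsub
  · apply le_csInf hSne
    rintro r ⟨a, c, hle, rfl⟩
    -- project a/2 onto T
    obtain ⟨x₀, hx₀T, hproj⟩ := exists_norm_eq_iInf_of_complete_convex hTne
      (hTcomp.isClosed.isComplete) hTconv ((1/2 : ℝ) • a)
    rw [norm_eq_iInf_iff_real_inner_le_zero hTconv hx₀T] at hproj
    -- pointwise: tangent at x₀ is between u and Q on T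
    have hpt : ∀ x ∈ T, (inner ℝ a x : ℝ) + c ≤ 2 * (inner ℝ x₀ x : ℝ) - ‖x₀‖ ^ 2 := by
      intro x hx
      have h1 : (inner ℝ a x₀ : ℝ) + c ≤ ‖x₀‖ ^ 2 := by
        have := hle x₀ hx₀T; rwa [hsq x₀] at this
      have h2 := hproj x hx
      rw [inner_sub_left, inner_sub_right, inner_sub_right, real_inner_smul_left,
        real_inner_smul_left, real_inner_self_eq_norm_sq] at h2
      have hc : (inner ℝ x₀ x : ℝ) = (inner ℝ x x₀ : ℝ) := (real_inner_comm x x₀)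

      linarith
    have hmono : f x₀ ≤ (∫ x in T, ((∑ j, x j ^ 2) - ((inner ℝ a x : ℝ) + c)) ^ p) ^ (1 / p) := by
      apply Real.rpow_le_rpow
      · apply setIntegral_nonneg hTmeas
        intro x _
        exact Real.rpow_nonneg (by linarith [htang x₀ x]) p
      · apply setIntegral_mono_on (hintegT x₀) (hinteg a c) hTmeas
        intro x hx
        exact Real.rpow_le_rpow (by linarith [htang x₀ x]) (by linarith [hpt x hx]) hp0
      · exact hip0
    exact le_trans (ciInf_le hfbdd x₀) hmono
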